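/- Let q₂ > q₁ > 2 be odd integers. Then for every n ≥ 1, f_{2,q₁}(n) ≥ f_{2,q₂}(n). -/

import Mathlib

open Filter Real

/-- Number of representations of `n` as a sum of distinct terms of the form `p^a * q^b`. -/
noncomputable def fpq (p q n : ℕ) : ℕ :=
  Set.ncard {S : Finset ℕ | (∀ k ∈ S, ∃ a b : ℕ, k = p ^ a * q ^ b) ∧ S.sum id = n}

open Finset


/-- number of base-q representations with unbounded digits -/
def g (q : ℕ) : ℕ → ℕ
  | 0 => 1
  | (n+1) =>
    ∑ t ∈ (Finset.range ((n+1)/q + 1)).attach,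
      if h : t.1 < n + 1 then g q t.1 else 0
  termination_by n => n
  decreasing_by exact h

lemma g_zero (q : ℕ) : g q 0 = 1 := by rw [g]

lemma g_eq {q : ℕ} (hq : 2 ≤ q) (n : ℕ) :
    g q n = ∑ t ∈ Finset.range (n/q + 1), g q t := by
  cases n with
  | zero => simp [g, Nat.zero_div]
  | succ n =>
    rw [g]
    rw [Finset.sum_attach (Finset.range ((n+1)/q + 1))
      (fun t => if h : t < n + 1 then g q t else 0)]
    refine Finset.sum_congr rfl fun t ht => ?_
    rw [dif_pos]
    exact lt_of_le_of_lt (Nat.lt_succ_iff.mp (Finset.mem_range.mp ht))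
      (Nat.div_lt_self (Nat.succ_pos n) hq)

lemma g_mono {q : ℕ} (hq : 2 ≤ q) {n m : ℕ} (h : n ≤ m) : g q n ≤ g q m := by
  rw [g_eq hq n, g_eq hq m]
  exact Finset.sum_le_sum_of_subset
    (Finset.range_subset_range.mpr (by exact Nat.succ_le_succ (Nat.div_le_div_right h)))

lemma g_anti {q₁ q₂ : ℕ} (hq : 2 ≤ q₁) (h : q₁ ≤ q₂) (n : ℕ) : g q₂ n ≤ g q₁ n := by
  induction n using Nat.strong_induction_on with
  | _ n ih =>
    cases n with
    | zero => simp [g_zero]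
    | succ n =>
      rw [g_eq (le_trans hq h), g_eq hq]
      calc ∑ t ∈ Finset.range ((n+1)/q₂ + 1), g q₂ t
          ≤ ∑ t ∈ Finset.range ((n+1)/q₂ + 1), g q₁ t := by
            refine Finset.sum_le_sum fun t ht => ih t ?_
            exact lt_of_le_of_lt (Nat.lt_succ_iff.mp (Finset.mem_range.mp ht))
              (Nat.div_lt_self (Nat.succ_pos n) (lt_of_lt_of_le hq h))
        _ ≤ ∑ t ∈ Finset.range ((n+1)/q₁ + 1), g q₁ t :=
            Finset.sum_le_sum_of_subset (Finset.range_subset_range.mpr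
              (Nat.succ_le_succ (Nat.div_le_div_left h (lt_of_lt_of_le two_pos hq))))

lemma q_not_dvd_two_pow {q : ℕ} (hq3 : 3 ≤ q) (hodd : Odd q) (a : ℕ) : ¬ q ∣ 2^a := by
  intro hd
  have hc : Nat.Coprime q (2^a) :=
    Nat.Coprime.pow_right a (Nat.coprime_two_right.mpr hodd)
  have h1 : q = 1 := hc.eq_one_of_dvd hd
  omega


lemma sum_two_pow_inj {A B : Finset ℕ} (h : ∑ a ∈ A, 2^a = ∑ b ∈ B, 2^b) : A = B := by
  have key : ∀ C : Finset ℕ, ((C.sort (· ≤ ·)).map (2 ^ ·)).sum = ∑ c ∈ C, 2^c := by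
    intro C
    rw [← List.sum_toFinset _ (C.sort_nodup (· ≤ ·)), Finset.sort_toFinset]
  have h1 := Nat.bitIndices_twoPowsum (L := A.sort (· ≤ ·)) (Finset.sortedLT_sort A)
  have h2 := Nat.bitIndices_twoPowsum (L := B.sort (· ≤ ·)) (Finset.sortedLT_sort B)
  rw [key] at h1 h2
  rw [h] at h1
  have : A.sort (· ≤ ·) = B.sort (· ≤ ·) := by rw [← h1, ← h2]
  rw [← Finset.sort_toFinset A (· ≤ ·), ← Finset.sort_toFinset B (· ≤ ·), this]

def pow2finset (m : ℕ) : Finset ℕ := m.bitIndices.toFinset.image (2 ^ ·)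

lemma pow2finset_sum (m : ℕ) : (pow2finset m).sum id = m := by
  rw [pow2finset, Finset.sum_image (fun x _ y _ h => Nat.pow_right_injective le_rfl h)]
  rw [List.sum_toFinset _ (Nat.bitIndices_sorted.nodup)]
  simpa using Nat.twoPowSum_bitIndices m

lemma pow2finset_mem {m k : ℕ} (h : k ∈ pow2finset m) : ∃ a, k = 2^a := by
  simp only [pow2finset, Finset.mem_image] at h
  obtain ⟨a, _, rfl⟩ := h
  exact ⟨a, rfl⟩

/-- uniqueness of binary representation -/
lemma pow2_unique {P : Finset ℕ} (hP : ∀ k ∈ P, ∃ a, k = 2^a) :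
    P = pow2finset (P.sum id) := by
  have hrep : ∀ C : Finset ℕ, (∀ k ∈ C, ∃ a, k = 2^a) →
      C = (C.image (Nat.log 2)).image (2 ^ ·) := by
    intro C hC
    rw [Finset.image_image]
    symm
    apply Finset.image_congr ?_ |>.trans (Finset.image_id)
    intro k hk
    obtain ⟨a, rfl⟩ := hC k hk
    simp [Nat.log_pow]
  have h1 := hrep P hP
  have h2 := hrep (pow2finset (P.sum id)) (fun k hk => pow2finset_mem hk)
  have hsum : ∀ C : Finset ℕ, (∀ k ∈ C, ∃ a, k = 2^a) →
      ∑ a ∈ C.image (Nat.log 2), 2^a = C.sum id := by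
    intro C hC
    conv_rhs => rw [hrep C hC]
    rw [Finset.sum_image (fun x _ y _ h => Nat.pow_right_injective le_rfl h)]
    simp
  have heq : ∑ a ∈ P.image (Nat.log 2), 2^a
      = ∑ a ∈ (pow2finset (P.sum id)).image (Nat.log 2), 2^a := by
    rw [hsum P hP, hsum _ (fun k hk => pow2finset_mem hk), pow2finset_sum]
  calc P = (P.image (Nat.log 2)).image (2 ^ ·) := h1
    _ = ((pow2finset (P.sum id)).image (Nat.log 2)).image (2 ^ ·) := by
        rw [sum_two_pow_inj heq]
    _ = pow2finset (P.sum id) := h2.symm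
open scoped Classical in
noncomputable def Afin (q n : ℕ) : Finset (Finset ℕ) :=
  ((Finset.range (n+1)).powerset).filter
    (fun S => (∀ k ∈ S, ∃ a b : ℕ, k = 2^a * q^b) ∧ S.sum id = n)

noncomputable def Acard (q n : ℕ) : ℕ := (Afin q n).card

lemma elt_le_sum {S : Finset ℕ} {k : ℕ} (hk : k ∈ S) : k ≤ S.sum id :=
  Finset.single_le_sum (f := id) (fun i _ => Nat.zero_le _) hk

lemma mem_Afin {q n : ℕ} {S : Finset ℕ} :
    S ∈ Afin q n ↔ (∀ k ∈ S, ∃ a b : ℕ, k = 2^a * q^b) ∧ S.sum id = n := by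
  classical
  constructor
  · intro h
    simp only [Afin, Finset.mem_filter, Finset.filter_congr_decidable] at h
    exact h.2
  · intro h
    simp only [Afin, Finset.mem_filter, Finset.filter_congr_decidable]
    refine ⟨Finset.mem_powerset.mpr fun k hk => Finset.mem_range.mpr ?_, h⟩
    have := elt_le_sum hk
    omega

lemma fpq_eq_Acard (q n : ℕ) :
    Set.ncard {S : Finset ℕ | (∀ k ∈ S, ∃ a b : ℕ, k = 2 ^ a * q ^ b) ∧ S.sum id = n}
      = Acard q n := by
  rw [Acard, ← Set.ncard_coe_finset]
  congr 1
  ext S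
  simp only [Set.mem_setOf_eq, Finset.coe_sort_coe, Finset.mem_coe, mem_Afin]

lemma Acard_zero (q : ℕ) (hq : 3 ≤ q) : Acard q 0 = 1 := by
  classical
  rw [Acard]
  convert Finset.card_singleton (∅ : Finset ℕ)
  ext S
  simp only [mem_Afin, Finset.mem_singleton]
  constructor
  · rintro ⟨hval, hsum⟩
    ext k
    simp only [Finset.notMem_empty, iff_false]
    intro hk
    obtain ⟨a, b, rfl⟩ := hval k hk
    have hle := elt_le_sum hk
    rw [hsum] at hle
    have : 0 < 2^a * q^b := Nat.mul_pos (pow_pos (by norm_num) a)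
      (pow_pos (by omega) b)
    omega
  · rintro rfl
    exact ⟨by simp, by simp⟩

lemma Acard_rec {q : ℕ} (hq3 : 3 ≤ q) (hodd : Odd q) (n : ℕ) :
    Acard q n = ∑ t ∈ Finset.range (n/q + 1), Acard q t := by
  classical
  have hqpos : 0 < q := by omega
  rw [Acard]
  rw [Finset.card_eq_sum_card_fiberwise
    (f := fun S => (S.filter (fun k => q ∣ k)).sum id / q)
    (t := Finset.range (n/q + 1)) ?_]
  · refine Finset.sum_congr rfl fun t ht => ?_
    have htle : t ≤ n / q := Nat.lt_succ_iff.mp (Finset.mem_range.mp ht)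
    have hqtn : q * t ≤ n := by
      rw [mul_comm]
      exact (Nat.le_div_iff_mul_le hqpos).mp htle
    refine Finset.card_bij'
      (i := fun S _ => (S.filter (fun k => q ∣ k)).image (· / q))
      (j := fun S' _ => pow2finset (n - q*t) ∪ S'.image (fun k => q * k))
      ?_ ?_ ?_ ?_
    · -- i maps into Afin q t
      intro S hS
      rw [Finset.mem_filter] at hS
      obtain ⟨hSA, hfib⟩ := hS
      rw [mem_Afin] at hSA
      obtain ⟨hval, hsum⟩ := hSA
      -- q ∣ fsum
      have hdvd : q ∣ (S.filter (fun k => q ∣ k)).sum id :=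
        Finset.dvd_sum (fun k hk => (Finset.mem_filter.mp hk).2)
      have hfsum : (S.filter (fun k => q ∣ k)).sum id = q * t := by
        obtain ⟨c, hc⟩ := hdvd
        rw [hc] at hfib ⊢
        rw [Nat.mul_div_cancel_left c hqpos] at hfib
        rw [hfib]
      have hinj : ∀ x ∈ S.filter (fun k => q ∣ k), ∀ y ∈ S.filter (fun k => q ∣ k),
          x / q = y / q → x = y := by
        intro x hx y hy hxy
        have hx' := (Finset.mem_filter.mp hx).2
        have hy' := (Finset.mem_filter.mp hy).2
        rw [← Nat.mul_div_cancel' hx', ← Nat.mul_div_cancel' hy', hxy]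
      have hsumim : ((S.filter (fun k => q ∣ k)).image (· / q)).sum id = t := by
        rw [Finset.sum_image hinj]
        have : ∀ x ∈ S.filter (fun k => q ∣ k), id (x / q) = x / q := fun _ _ => rfl
        have hkey : q * ∑ x ∈ S.filter (fun k => q ∣ k), x / q
            = ∑ x ∈ S.filter (fun k => q ∣ k), x := by
          rw [Finset.mul_sum]
          refine Finset.sum_congr rfl fun x hx => ?_
          exact Nat.mul_div_cancel' (Finset.mem_filter.mp hx).2
        have : q * ∑ x ∈ S.filter (fun k => q ∣ k), x / q = q * t := by
          rw [hkey]; simpa [id] using hfsum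
        exact Nat.eq_of_mul_eq_mul_left hqpos this
      rw [mem_Afin]
      constructor
      · intro k hk
        rw [Finset.mem_image] at hk
        obtain ⟨x, hx, rfl⟩ := hk
        rw [Finset.mem_filter] at hx
        obtain ⟨hxS, hxq⟩ := hx
        obtain ⟨a, b, rfl⟩ := hval x hxS
        cases b with
        | zero =>
          exfalso
          rw [pow_zero, mul_one] at hxq
          exact q_not_dvd_two_pow hq3 hodd a hxq
        | succ b' =>
          refine ⟨a, b', ?_⟩
          have : 2^a * q^(b'+1) = q * (2^a * q^b') := by ring
          rw [this, Nat.mul_div_cancel_left _ hqpos]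
      · exact hsumim
    · -- j maps into fiber
      intro S' hS'
      rw [mem_Afin] at hS'
      obtain ⟨hval', hsum'⟩ := hS'
      have hdisj : Disjoint (pow2finset (n - q*t)) (S'.image (fun k => q * k)) := by
        rw [Finset.disjoint_left]
        intro k hk1 hk2
        obtain ⟨a, rfl⟩ := pow2finset_mem hk1
        rw [Finset.mem_image] at hk2
        obtain ⟨x, _, hx⟩ := hk2
        exact q_not_dvd_two_pow hq3 hodd a ⟨x, hx.symm⟩
      have hinj' : ∀ x ∈ S', ∀ y ∈ S', q * x = q * y → x = y :=
        fun x _ y _ h => Nat.eq_of_mul_eq_mul_left hqpos h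
      have hsumim' : (S'.image (fun k => q * k)).sum id = q * t := by
        rw [Finset.sum_image hinj']
        have hh : (∑ x ∈ S', id (q * x)) = q * S'.sum id := by
          simp only [id]
          rw [Finset.mul_sum]
        rw [hh, hsum']
      have hsumj : (pow2finset (n - q*t) ∪ S'.image (fun k => q * k)).sum id = n := by
        rw [Finset.sum_union hdisj, pow2finset_sum, hsumim']
        omega
      have hfilt : (pow2finset (n - q*t) ∪ S'.image (fun k => q * k)).filter (fun k => q ∣ k)
          = S'.image (fun k => q * k) := by
        rw [Finset.filter_union]
        have h1 : (pow2finset (n - q*t)).filter (fun k => q ∣ k) = ∅ := by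
          rw [Finset.filter_eq_empty_iff]
          intro k hk
          obtain ⟨a, rfl⟩ := pow2finset_mem hk
          exact q_not_dvd_two_pow hq3 hodd a
        have h2 : (S'.image (fun k => q * k)).filter (fun k => q ∣ k)
            = S'.image (fun k => q * k) := by
          rw [Finset.filter_true_of_mem]
          intro k hk
          rw [Finset.mem_image] at hk
          obtain ⟨x, _, rfl⟩ := hk
          exact Dvd.intro x rfl
        rw [h1, h2, Finset.empty_union]
      rw [Finset.mem_filter]
      constructor
      · rw [mem_Afin]
        refine ⟨?_, hsumj⟩
        intro k hk
        rw [Finset.mem_union] at hk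
        rcases hk with hk | hk
        · obtain ⟨a, rfl⟩ := pow2finset_mem hk
          exact ⟨a, 0, by ring⟩
        · rw [Finset.mem_image] at hk
          obtain ⟨x, hx, rfl⟩ := hk
          obtain ⟨a, b, rfl⟩ := hval' x hx
          exact ⟨a, b+1, by ring⟩
      · rw [hfilt, hsumim', Nat.mul_div_cancel_left t hqpos]
    · -- left inverse : j (i S) = S
      intro S hS
      rw [Finset.mem_filter] at hS
      obtain ⟨hSA, hfib⟩ := hS
      rw [mem_Afin] at hSA
      obtain ⟨hval, hsum⟩ := hSA
      have hdvd : q ∣ (S.filter (fun k => q ∣ k)).sum id :=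
        Finset.dvd_sum (fun k hk => (Finset.mem_filter.mp hk).2)
      have hfsum : (S.filter (fun k => q ∣ k)).sum id = q * t := by
        obtain ⟨c, hc⟩ := hdvd
        rw [hc] at hfib ⊢
        rw [Nat.mul_div_cancel_left c hqpos] at hfib
        rw [hfib]
      -- image back
      have himgback : (((S.filter (fun k => q ∣ k)).image (· / q)).image (fun k => q * k))
          = S.filter (fun k => q ∣ k) := by
        rw [Finset.image_image]
        refine (Finset.image_congr ?_).trans Finset.image_id
        intro k hk
        exact Nat.mul_div_cancel' (Finset.mem_filter.mp hk).2
      have hPval : ∀ k ∈ S.filter (fun k => ¬ q ∣ k), ∃ a, k = 2^a := by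
        intro k hk
        rw [Finset.mem_filter] at hk
        obtain ⟨hkS, hknd⟩ := hk
        obtain ⟨a, b, rfl⟩ := hval k hkS
        cases b with
        | zero => exact ⟨a, by ring⟩
        | succ b' =>
          exfalso
          exact hknd ⟨2^a * q^b', by ring⟩
      have hPsum : (S.filter (fun k => ¬ q ∣ k)).sum id = n - q * t := by
        have h0 := Finset.sum_filter_add_sum_filter_not S (fun k => q ∣ k) id
        rw [hfsum, hsum] at h0
        exact Nat.eq_sub_of_add_eq' h0
      have hP : pow2finset (n - q*t) = S.filter (fun k => ¬ q ∣ k) := by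
        rw [← hPsum]
        exact (pow2_unique hPval).symm
      rw [himgback, hP]
      rw [Finset.union_comm, Finset.filter_union_filter_not_eq]
    · -- right inverse : i (j S') = S'
      intro S' hS'
      rw [mem_Afin] at hS'
      obtain ⟨hval', hsum'⟩ := hS'
      have hfilt : (pow2finset (n - q*t) ∪ S'.image (fun k => q * k)).filter (fun k => q ∣ k)
          = S'.image (fun k => q * k) := by
        rw [Finset.filter_union]
        have h1 : (pow2finset (n - q*t)).filter (fun k => q ∣ k) = ∅ := by
          rw [Finset.filter_eq_empty_iff]
          intro k hk
          obtain ⟨a, rfl⟩ := pow2finset_mem hk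
          exact q_not_dvd_two_pow hq3 hodd a
        have h2 : (S'.image (fun k => q * k)).filter (fun k => q ∣ k)
            = S'.image (fun k => q * k) := by
          rw [Finset.filter_true_of_mem]
          intro k hk
          rw [Finset.mem_image] at hk
          obtain ⟨x, _, rfl⟩ := hk
          exact Dvd.intro x rfl
        rw [h1, h2, Finset.empty_union]
      rw [hfilt, Finset.image_image]
      refine (Finset.image_congr ?_).trans Finset.image_id
      intro k _
      exact Nat.mul_div_cancel_left k hqpos
  · -- fiber map lands in range
    intro S hS
    rw [Finset.mem_coe, mem_Afin] at hS
    obtain ⟨hval, hsum⟩ := hS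
    rw [Finset.mem_coe, Finset.mem_range, Nat.lt_succ_iff]
    refine Nat.div_le_div_right ?_
    calc (S.filter (fun k => q ∣ k)).sum id ≤ S.sum id :=
          Finset.sum_le_sum_of_subset (Finset.filter_subset _ _)
      _ = n := hsum

lemma Acard_eq_g {q : ℕ} (hq3 : 3 ≤ q) (hodd : Odd q) : ∀ n, Acard q n = g q n := by
  intro n
  induction n using Nat.strong_induction_on with
  | _ n ih =>
    cases n with
    | zero => rw [Acard_zero q hq3, g_zero]
    | succ n =>
      rw [Acard_rec hq3 hodd, g_eq (by omega : 2 ≤ q)]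
      refine Finset.sum_congr rfl fun t ht => ?_
      exact ih t (lt_of_le_of_lt (Nat.lt_succ_iff.mp (Finset.mem_range.mp ht))
        (Nat.div_lt_self (Nat.succ_pos n) (by omega)))

theorem stmt9 (q₁ q₂ : ℕ) (h1 : 2 < q₁) (h2 : q₁ < q₂)
    (hodd1 : Odd q₁) (hodd2 : Odd q₂) (n : ℕ) (hn : 1 ≤ n) :
    fpq 2 q₂ n ≤ fpq 2 q₁ n := by
  have hq1 : 3 ≤ q₁ := by omega
  have hq2 : 3 ≤ q₂ := by omega
  simp only [fpq]
  rw [fpq_eq_Acard q₂ n, fpq_eq_Acard q₁ n, Acard_eq_g hq2 hodd2, Acard_eq_g hq1 hodd1]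
  exact g_anti (by omega) (le_of_lt h2) n
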